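/- Second variation of the unit normal: Let ψ, v, w : ℝ² → ℝ³ be differentiable at x ∈ ℝ² with ∂₁ψ(x) × ∂₂ψ(x) ≠ 0, and let N(t,s) = n[ψ + t v + s w](x), defined for (t,s) near (0,0). Then the mixed second partial derivative ∂ₛ∂ₜ N(0,0) equals −∇w g⁻¹ (∇v)ᵀ n − ∇ψ δg⁻¹(w) (∇v)ᵀ n − ∇ψ g⁻¹ (∇v)ᵀ δn(w), where all Jacobians are evaluated at x, g = g[ψ](x), n = n[ψ](x), δg⁻¹(w) = −g⁻¹((∇w)ᵀ∇ψ + (∇ψ)ᵀ∇w)g⁻¹, and δn(w) = −∇ψ g⁻¹ (∇w)ᵀ n. -/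

import Mathlib

open Matrix MeasureTheory

noncomputable section

/-- `i`-th partial derivative of `ψ : ℝ² → ℝ³` at `x`. -/
def pd (ψ : (Fin 2 → ℝ) → (Fin 3 → ℝ)) (i : Fin 2) (x : Fin 2 → ℝ) : Fin 3 → ℝ :=
  fderiv ℝ ψ x (Pi.single i 1)

/-- Jacobian matrix `∇ψ(x) ∈ ℝ^{3×2}`. -/
def jac (ψ : (Fin 2 → ℝ) → (Fin 3 → ℝ)) (x : Fin 2 → ℝ) : Matrix (Fin 3) (Fin 2) ℝ :=
  Matrix.of fun m i => pd ψ i x m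

/-- First fundamental form `g[ψ](x) = (∇ψ(x))ᵀ ∇ψ(x)`. -/
def met (ψ : (Fin 2 → ℝ) → (Fin 3 → ℝ)) (x : Fin 2 → ℝ) : Matrix (Fin 2) (Fin 2) ℝ :=
  (jac ψ x)ᵀ * jac ψ x

/-- Euclidean inner product on `ℝ³`. -/
def dot3 (u v : Fin 3 → ℝ) : ℝ := ∑ m, u m * v m

/-- Euclidean norm on `ℝ³`. -/
def norm3 (u : Fin 3 → ℝ) : ℝ := Real.sqrt (dot3 u u)

/-- Cross product `∂₁ψ(x) × ∂₂ψ(x)`. -/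
def crossPsi (ψ : (Fin 2 → ℝ) → (Fin 3 → ℝ)) (x : Fin 2 → ℝ) : Fin 3 → ℝ :=
  crossProduct (pd ψ 0 x) (pd ψ 1 x)

/-- Unit normal `n[ψ](x)`. -/
def nrm (ψ : (Fin 2 → ℝ) → (Fin 3 → ℝ)) (x : Fin 2 → ℝ) : Fin 3 → ℝ :=
  (norm3 (crossPsi ψ x))⁻¹ • crossPsi ψ x

/-- Second partial derivative `∂ᵢ∂ⱼψ(x)`. -/
def pd2 (ψ : (Fin 2 → ℝ) → (Fin 3 → ℝ)) (i j : Fin 2) (x : Fin 2 → ℝ) : Fin 3 → ℝ :=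
  pd (pd ψ j) i x

/-- Hessian `D²ψᵐ(x)` of the `m`-th component. -/
def hess (ψ : (Fin 2 → ℝ) → (Fin 3 → ℝ)) (m : Fin 3) (x : Fin 2 → ℝ) :
    Matrix (Fin 2) (Fin 2) ℝ :=
  Matrix.of fun i j => pd2 ψ i j x m

/-- Second fundamental form `II[ψ](x)ᵢⱼ = ∂ᵢ∂ⱼψ(x)·n[ψ](x)`. -/
def sff (ψ : (Fin 2 → ℝ) → (Fin 3 → ℝ)) (x : Fin 2 → ℝ) : Matrix (Fin 2) (Fin 2) ℝ :=
  Matrix.of fun i j => dot3 (pd2 ψ i j x) (nrm ψ x)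

/-- Frobenius inner product `A : B`. -/
def frob {n : Type*} [Fintype n] (A B : Matrix n n ℝ) : ℝ := ∑ i, ∑ j, A i j * B i j

/-- Gram–Schmidt frame vector `y¹[ψ](x)`. -/
def y1 (ψ : (Fin 2 → ℝ) → (Fin 3 → ℝ)) (x : Fin 2 → ℝ) : Fin 3 → ℝ :=
  (norm3 (pd ψ 0 x))⁻¹ • pd ψ 0 x

/-- Gram–Schmidt vector `ŷ²[ψ](x)` (before normalization). -/
def yhat2 (ψ : (Fin 2 → ℝ) → (Fin 3 → ℝ)) (x : Fin 2 → ℝ) : Fin 3 → ℝ :=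
  pd ψ 1 x - (dot3 (pd ψ 1 x) (y1 ψ x)) • y1 ψ x

/-- Gram–Schmidt frame vector `y²[ψ](x)`. -/
def y2 (ψ : (Fin 2 → ℝ) → (Fin 3 → ℝ)) (x : Fin 2 → ℝ) : Fin 3 → ℝ :=
  (norm3 (yhat2 ψ x))⁻¹ • yhat2 ψ x

section Aux

def unitv (u : Fin 3 → ℝ) : Fin 3 → ℝ := (norm3 u)⁻¹ • u
def mat2 (u v : Fin 3 → ℝ) : Matrix (Fin 3) (Fin 2) ℝ := Matrix.of fun m i => ![u, v] i m

lemma dot3_comm (u v : Fin 3 → ℝ) : dot3 u v = dot3 v u := by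
  simp [dot3, mul_comm]

lemma dot3_self_pos {u : Fin 3 → ℝ} (h : u ≠ 0) : 0 < dot3 u u := by
  obtain ⟨m, hm⟩ := Function.ne_iff.1 h
  exact Finset.sum_pos' (fun i _ => mul_self_nonneg _)
    ⟨m, Finset.mem_univ m, mul_self_pos.2 hm⟩

lemma norm3_pos {u : Fin 3 → ℝ} (h : u ≠ 0) : 0 < norm3 u :=
  Real.sqrt_pos.2 (dot3_self_pos h)

lemma dot3_self_nonneg (u : Fin 3 → ℝ) : 0 ≤ dot3 u u :=
  Finset.sum_nonneg fun i _ => mul_self_nonneg _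

lemma norm3_sq (u : Fin 3 → ℝ) : (norm3 u) ^ 2 = dot3 u u :=
  Real.sq_sqrt (dot3_self_nonneg u)


lemma hasDerivAt_dot3 {f g : ℝ → Fin 3 → ℝ} {f' g' : Fin 3 → ℝ} {t : ℝ}
    (hf : HasDerivAt f f' t) (hg : HasDerivAt g g' t) :
    HasDerivAt (fun t => dot3 (f t) (g t)) (dot3 f' (g t) + dot3 (f t) g') t := by
  have hfk := hasDerivAt_pi.1 hf
  have hgk := hasDerivAt_pi.1 hg
  have h := HasDerivAt.fun_sum (u := Finset.univ)
    (fun (m : Fin 3) _ => (hfk m).fun_mul (hgk m))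
  simpa [dot3, Finset.sum_add_distrib] using h

lemma hasDerivAt_affine (u p : Fin 3 → ℝ) (t : ℝ) :
    HasDerivAt (fun s : ℝ => u + s • p) p t := by
  simpa using ((hasDerivAt_id t).smul_const p).const_add u

lemma hasDerivAt_norm3 {f : ℝ → Fin 3 → ℝ} {f' : Fin 3 → ℝ} {t : ℝ}
    (hf : HasDerivAt f f' t) (h0 : f t ≠ 0) :
    HasDerivAt (fun s => norm3 (f s)) (dot3 (f t) f' / norm3 (f t)) t := by
  have hd := hasDerivAt_dot3 hf hf
  have hpos := dot3_self_pos h0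
  have h := hd.sqrt hpos.ne'
  have heq : (dot3 f' (f t) + dot3 (f t) f') / (2 * Real.sqrt (dot3 (f t) (f t)))
      = dot3 (f t) f' / norm3 (f t) := by
    rw [dot3_comm f' (f t)]
    rw [show norm3 (f t) = Real.sqrt (dot3 (f t) (f t)) from rfl]
    have : Real.sqrt (dot3 (f t) (f t)) ≠ 0 := (Real.sqrt_pos.2 hpos).ne'
    field_simp
    ring
  rw [heq] at h
  exact h

lemma hasDerivAt_unitv {f : ℝ → Fin 3 → ℝ} {f' : Fin 3 → ℝ} {t : ℝ}
    (hf : HasDerivAt f f' t) (h0 : f t ≠ 0) :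
    HasDerivAt (fun s => unitv (f s))
      ((norm3 (f t))⁻¹ • (f' - (dot3 (f t) f' / dot3 (f t) (f t)) • f t)) t := by
  have hn := hasDerivAt_norm3 hf h0
  have hr := norm3_pos h0
  have hi := hn.fun_inv hr.ne'
  have h := hi.fun_smul hf
  have heq : (norm3 (f t))⁻¹ • f'
        + (-(dot3 (f t) f' / norm3 (f t)) / norm3 (f t) ^ 2) • f t
      = (norm3 (f t))⁻¹ • (f' - (dot3 (f t) f' / dot3 (f t) (f t)) • f t) := by
    rw [smul_sub, smul_smul]
    have h2 : norm3 (f t) ^ 2 = dot3 (f t) (f t) := norm3_sq (f t)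
    rw [← h2]
    funext k
    simp only [Pi.add_apply, Pi.sub_apply, Pi.smul_apply, smul_eq_mul]
    field_simp
    ring
  rw [heq] at h
  exact h

lemma hasDerivAt_cross (f g : ℝ → Fin 3 → ℝ) (f' g' : Fin 3 → ℝ) (t : ℝ)
    (hf : HasDerivAt f f' t) (hg : HasDerivAt g g' t) :
    HasDerivAt (fun t => crossProduct (f t) (g t))
      (crossProduct f' (g t) + crossProduct (f t) g') t := by
  have hfk := hasDerivAt_pi.1 hf
  have hgk := hasDerivAt_pi.1 hg
  rw [hasDerivAt_pi]
  intro k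
  fin_cases k
  · have h0 := ((hfk 1).fun_mul (hgk 2)).fun_sub ((hfk 2).fun_mul (hgk 1))
    convert h0 using 1 <;> simp [cross_apply] <;> ring
  · have h1 := ((hfk 2).fun_mul (hgk 0)).fun_sub ((hfk 0).fun_mul (hgk 2))
    convert h1 using 1 <;> simp [cross_apply] <;> ring
  · have h2 := ((hfk 0).fun_mul (hgk 1)).fun_sub ((hfk 1).fun_mul (hgk 0))
    convert h2 using 1 <;> simp [cross_apply] <;> ring

set_option maxHeartbeats 2000000 in
lemma key1 (a0 a1 b0 b1 : Fin 3 → ℝ) (h : crossProduct a0 a1 ≠ 0) :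
    HasDerivAt (fun t : ℝ => unitv (crossProduct (a0 + t • b0) (a1 + t • b1)))
      (-((mat2 a0 a1 * ((mat2 a0 a1)ᵀ * mat2 a0 a1)⁻¹ * (mat2 b0 b1)ᵀ) *ᵥ
          unitv (crossProduct a0 a1))) 0 := by
  have hc : HasDerivAt (fun t : ℝ => crossProduct (a0 + t • b0) (a1 + t • b1))
      (crossProduct b0 a1 + crossProduct a0 b1) 0 := by
    have := hasDerivAt_cross (fun t : ℝ => a0 + t • b0) (fun t : ℝ => a1 + t • b1)
      b0 b1 0 (hasDerivAt_affine a0 b0 0) (hasDerivAt_affine a1 b1 0)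
    simpa using this
  have h0 : (fun t : ℝ => crossProduct (a0 + t • b0) (a1 + t • b1)) 0 ≠ 0 := by
    simpa using h
  have hu := hasDerivAt_unitv hc h0
  simp only [zero_smul, add_zero] at hu
  set m := crossProduct a0 a1 with hm
  set p := crossProduct b0 a1 + crossProduct a0 b1 with hp
  have hval : (norm3 m)⁻¹ • (p - (dot3 m p / dot3 m m) • m)
      = -((mat2 a0 a1 * ((mat2 a0 a1)ᵀ * mat2 a0 a1)⁻¹ * (mat2 b0 b1)ᵀ) *ᵥ unitv m) := by
    have hR := dot3_self_pos h
    have hdet : ((mat2 a0 a1)ᵀ * mat2 a0 a1).det = dot3 m m := by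
      simp [Matrix.det_fin_two, Matrix.mul_apply, mat2, Fin.sum_univ_three,
        dot3, hm, cross_apply]
      ring
    have hinv : ((mat2 a0 a1)ᵀ * mat2 a0 a1)⁻¹
        = (dot3 m m)⁻¹ • !![((mat2 a0 a1)ᵀ * mat2 a0 a1) 1 1,
            -(((mat2 a0 a1)ᵀ * mat2 a0 a1) 0 1);
            -(((mat2 a0 a1)ᵀ * mat2 a0 a1) 1 0), ((mat2 a0 a1)ᵀ * mat2 a0 a1) 0 0] := by
      rw [Matrix.inv_def, Matrix.adjugate_fin_two, Ring.inverse_eq_inv', hdet]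
    have hRne := (dot3_self_pos h).ne'
    rw [hinv, Matrix.mul_smul, Matrix.smul_mul, Matrix.smul_mulVec,
      show unitv m = (norm3 m)⁻¹ • m from rfl, Matrix.mulVec_smul,
      smul_comm ((dot3 m m)⁻¹) ((norm3 m)⁻¹), ← smul_neg]
    congr 1
    apply smul_right_injective (Fin 3 → ℝ) hRne
    show dot3 m m • _ = dot3 m m • _
    rw [smul_sub, smul_smul, mul_div_cancel₀ _ hRne, smul_neg, smul_smul,
      mul_inv_cancel₀ hRne, one_smul]
    funext k
    simp only [Pi.sub_apply, Pi.smul_apply, Pi.neg_apply, Pi.add_apply, smul_eq_mul,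
      Matrix.mulVec, Matrix.mul_apply, dotProduct, Fin.sum_univ_two, Fin.sum_univ_three,
      Matrix.transpose_apply, mat2, Matrix.of_apply, hm, hp, cross_apply, dot3,
      Matrix.cons_val', Matrix.cons_val_zero, Matrix.cons_val_one, Matrix.head_cons,
      Matrix.cons_val_fin_one, Matrix.empty_val', Matrix.head_fin_const]
    fin_cases k <;>
    · simp
      ring
  rw [hval] at hu
  exact hu

lemma hasDerivAt_mulVec {k l : Type*} [Fintype l] [Fintype k] [DecidableEq l]
    (M : ℝ → Matrix k l ℝ) (M' : Matrix k l ℝ) (u : ℝ → l → ℝ) (u' : l → ℝ) (t : ℝ)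
    (hM : ∀ i j, HasDerivAt (fun s => M s i j) (M' i j) t)
    (hu : HasDerivAt u u' t) :
    HasDerivAt (fun s => M s *ᵥ u s) (M' *ᵥ u t + M t *ᵥ u') t := by
  rw [hasDerivAt_pi]
  intro i
  have h := HasDerivAt.fun_sum (u := Finset.univ)
    (fun (j : l) _ => (hM i j).fun_mul ((hasDerivAt_pi.1 hu) j))
  simpa [Matrix.mulVec, dotProduct, Finset.sum_add_distrib] using h

lemma inv2_hasDerivAt (Gf : ℝ → Matrix (Fin 2) (Fin 2) ℝ)
    (G' : Matrix (Fin 2) (Fin 2) ℝ) (t : ℝ)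
    (h : ∀ i j, HasDerivAt (fun s => Gf s i j) (G' i j) t)
    (hdet : (Gf t).det ≠ 0) :
    ∀ i j, HasDerivAt (fun s => (Gf s)⁻¹ i j)
      ((-((Gf t)⁻¹ * G' * (Gf t)⁻¹)) i j) t := by
  have hrw : ∀ s, (Gf s)⁻¹ = ((Gf s).det)⁻¹ •
      !![Gf s 1 1, -(Gf s 0 1); -(Gf s 1 0), Gf s 0 0] := by
    intro s
    rw [Matrix.inv_def, Matrix.adjugate_fin_two, Ring.inverse_eq_inv']
  have hdetf : HasDerivAt (fun s => (Gf s).det)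
      (G' 0 0 * Gf t 1 1 + Gf t 0 0 * G' 1 1 - (G' 0 1 * Gf t 1 0 + Gf t 0 1 * G' 1 0)) t := by
    simp only [Matrix.det_fin_two]
    exact ((h 0 0).mul (h 1 1)).sub ((h 0 1).mul (h 1 0))
  have hdinv := hdetf.inv hdet
  have hent : ∀ i j, HasDerivAt (fun s => ((Gf s).det)⁻¹ *
      !![Gf s 1 1, -(Gf s 0 1); -(Gf s 1 0), Gf s 0 0] i j)
      ((-(G' 0 0 * Gf t 1 1 + Gf t 0 0 * G' 1 1 - (G' 0 1 * Gf t 1 0 + Gf t 0 1 * G' 1 0))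
          / (Gf t).det ^ 2) * (!![Gf t 1 1, -(Gf t 0 1); -(Gf t 1 0), Gf t 0 0] i j)
        + ((Gf t).det)⁻¹ * (!![G' 1 1, -(G' 0 1); -(G' 1 0), G' 0 0] i j)) t := by
    intro i j
    fin_cases i <;> fin_cases j <;>
    · simp only [Matrix.cons_val', Matrix.cons_val_zero, Matrix.cons_val_one,
        Matrix.head_cons, Matrix.empty_val', Matrix.cons_val_fin_one, Matrix.head_fin_const]
      first
        | exact hdinv.mul (h 1 1)
        | exact hdinv.mul ((h 0 1).neg)
        | exact hdinv.mul ((h 1 0).neg)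
        | exact hdinv.mul (h 0 0)
  intro i j
  have h1 : HasDerivAt (fun s => (Gf s)⁻¹ i j)
      ((-(G' 0 0 * Gf t 1 1 + Gf t 0 0 * G' 1 1 - (G' 0 1 * Gf t 1 0 + Gf t 0 1 * G' 1 0))
          / (Gf t).det ^ 2) * (!![Gf t 1 1, -(Gf t 0 1); -(Gf t 1 0), Gf t 0 0] i j)
        + ((Gf t).det)⁻¹ * (!![G' 1 1, -(G' 0 1); -(G' 1 0), G' 0 0] i j)) t := by
    have heqf : (fun s => (Gf s)⁻¹ i j)
        = fun s => ((Gf s).det)⁻¹ * (!![Gf s 1 1, -(Gf s 0 1); -(Gf s 1 0), Gf s 0 0] i j) := by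
      funext s
      rw [hrw s]
      simp [Matrix.smul_apply]
    rw [heqf]
    exact hent i j
  convert h1 using 1
  have hdet2 : Gf t 0 0 * Gf t 1 1 - Gf t 0 1 * Gf t 1 0 ≠ 0 := by
    rwa [Matrix.det_fin_two] at hdet
  rw [hrw t]
  simp only [Matrix.neg_apply, Matrix.mul_apply, Fin.sum_univ_two, Matrix.smul_apply,
    smul_eq_mul, Matrix.det_fin_two]
  fin_cases i <;> fin_cases j <;>
  · simp only [Matrix.of_apply, Fin.zero_eta, Fin.mk_one, Matrix.cons_val', Matrix.cons_val_zero, Matrix.cons_val_one,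
      Matrix.head_cons, Matrix.empty_val', Matrix.cons_val_fin_one, Matrix.head_fin_const]
    field_simp [hdet2]
    ring

lemma det_met2 (a0 a1 : Fin 3 → ℝ) :
    ((mat2 a0 a1)ᵀ * mat2 a0 a1).det = dot3 (crossProduct a0 a1) (crossProduct a0 a1) := by
  simp [Matrix.det_fin_two, Matrix.mul_apply, mat2, Fin.sum_univ_three, dot3, cross_apply]
  ring

lemma jac_eq (φ : (Fin 2 → ℝ) → (Fin 3 → ℝ)) (x : Fin 2 → ℝ) :
    jac φ x = mat2 (pd φ 0 x) (pd φ 1 x) := by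
  funext m i
  fin_cases i <;> rfl

end Aux

/-- Second variation of the unit normal: with
`N(t,s) = n[ψ + tv + sw](x)`, the mixed second partial derivative
`∂ₛ∂ₜN(0,0)` equals
`−∇w g⁻¹ (∇v)ᵀ n − ∇ψ δg⁻¹(w) (∇v)ᵀ n − ∇ψ g⁻¹ (∇v)ᵀ δn(w)`. -/
theorem second_variation_normal
    (ψ v w : (Fin 2 → ℝ) → (Fin 3 → ℝ)) (x : Fin 2 → ℝ)
    (hψ : DifferentiableAt ℝ ψ x) (hv : DifferentiableAt ℝ v x)
    (hw : DifferentiableAt ℝ w x)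
    (hc : crossPsi ψ x ≠ 0) :
    HasDerivAt
      (fun s : ℝ =>
        deriv (fun t : ℝ => nrm (fun y => ψ y + t • v y + s • w y) x) 0)
      (-((jac w x * (met ψ x)⁻¹ * (jac v x)ᵀ) *ᵥ nrm ψ x)
        - ((jac ψ x *
            (-((met ψ x)⁻¹ * ((jac w x)ᵀ * jac ψ x + (jac ψ x)ᵀ * jac w x)
              * (met ψ x)⁻¹)) * (jac v x)ᵀ) *ᵥ nrm ψ x)
        - ((jac ψ x * (met ψ x)⁻¹ * (jac v x)ᵀ) *ᵥ
            (-((jac ψ x * (met ψ x)⁻¹ * (jac w x)ᵀ) *ᵥ nrm ψ x))))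
      0 := by
  have pd_pert : ∀ (t s : ℝ) (i : Fin 2),
      pd (fun y => ψ y + t • v y + s • w y) i x
        = pd ψ i x + t • pd v i x + s • pd w i x := by
    intro t s i
    have hF : HasFDerivAt (fun y => ψ y + t • v y + s • w y)
        (fderiv ℝ ψ x + t • fderiv ℝ v x + s • fderiv ℝ w x) x :=
      (hψ.hasFDerivAt.add (hv.hasFDerivAt.const_smul t)).add (hw.hasFDerivAt.const_smul s)
    simp [pd, hF.fderiv]
  have nrm_pert : ∀ (t s : ℝ),
      nrm (fun y => ψ y + t • v y + s • w y) x
        = unitv (crossProduct (pd ψ 0 x + t • pd v 0 x + s • pd w 0 x)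
            (pd ψ 1 x + t • pd v 1 x + s • pd w 1 x)) := by
    intro t s
    simp only [nrm, crossPsi, pd_pert, unitv]
  set a0 := pd ψ 0 x with ha0
  set a1 := pd ψ 1 x with ha1
  set b0 := pd v 0 x with hb0
  set b1 := pd v 1 x with hb1
  set d0 := pd w 0 x with hd0
  set d1 := pd w 1 x with hd1
  have hc' : crossProduct a0 a1 ≠ 0 := by simpa [crossPsi] using hc
  -- matrices
  set A : Matrix (Fin 3) (Fin 2) ℝ := mat2 a0 a1 with hA
  set B : Matrix (Fin 3) (Fin 2) ℝ := mat2 b0 b1 with hB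
  set Dm : Matrix (Fin 3) (Fin 2) ℝ := mat2 d0 d1 with hDm
  set G0 : Matrix (Fin 2) (Fin 2) ℝ := Aᵀ * A with hG0
  set n0 : Fin 3 → ℝ := unitv (crossProduct a0 a1) with hn0
  set dn : Fin 3 → ℝ := -((A * G0⁻¹ * Dmᵀ) *ᵥ n0) with hdn
  set G' : Matrix (Fin 2) (Fin 2) ℝ := Dmᵀ * A + Aᵀ * Dm with hG'
  have hdet0 : G0.det ≠ 0 := by
    rw [hG0, hA, det_met2]
    exact (dot3_self_pos hc').ne'
  -- the first-variation function of s
  set F : ℝ → Fin 3 → ℝ := fun s =>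
    -((mat2 (a0 + s • d0) (a1 + s • d1) *
        ((mat2 (a0 + s • d0) (a1 + s • d1))ᵀ * mat2 (a0 + s • d0) (a1 + s • d1))⁻¹ *
        Bᵀ) *ᵥ unitv (crossProduct (a0 + s • d0) (a1 + s • d1))) with hF
  -- eventually, the inner derivative equals F
  have hcontc : ContinuousAt (fun s : ℝ => crossProduct (a0 + s • d0) (a1 + s • d1)) 0 :=
    (hasDerivAt_cross (fun s : ℝ => a0 + s • d0) (fun s : ℝ => a1 + s • d1) d0 d1 0
      (hasDerivAt_affine a0 d0 0) (hasDerivAt_affine a1 d1 0)).continuousAt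
  have hev : ∀ᶠ s in nhds (0:ℝ), crossProduct (a0 + s • d0) (a1 + s • d1) ≠ 0 := by
    have := hcontc.eventually_ne (by simpa using hc')
    simpa using this
  have hFeq : (fun s : ℝ =>
      deriv (fun t : ℝ => nrm (fun y => ψ y + t • v y + s • w y) x) 0) =ᶠ[nhds 0] F := by
    refine hev.mono fun s hs => ?_
    show deriv (fun t : ℝ => nrm (fun y => ψ y + t • v y + s • w y) x) 0 = F s
    have hfun : (fun t : ℝ => nrm (fun y => ψ y + t • v y + s • w y) x)
        = fun t : ℝ => unitv (crossProduct ((a0 + s • d0) + t • b0) ((a1 + s • d1) + t • b1)) := by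
      funext t
      rw [nrm_pert, add_right_comm a0 (t • b0) (s • d0), add_right_comm a1 (t • b1) (s • d1)]
    rw [hfun]
    exact (key1 (a0 + s • d0) (a1 + s • d1) b0 b1 hs).deriv
  -- derivative of the normal direction n(s)
  have hn : HasDerivAt (fun s : ℝ => unitv (crossProduct (a0 + s • d0) (a1 + s • d1))) dn 0 :=
    key1 a0 a1 d0 d1 hc'
  -- entrywise derivative of A(s)
  have hAent : ∀ (k : Fin 3) (i : Fin 2),
      HasDerivAt (fun s : ℝ => mat2 (a0 + s • d0) (a1 + s • d1) k i) (Dm k i) 0 := by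
    intro k i
    fin_cases i
    · simpa [mat2, hDm] using (hasDerivAt_pi.1 (hasDerivAt_affine a0 d0 0)) k
    · simpa [mat2, hDm] using (hasDerivAt_pi.1 (hasDerivAt_affine a1 d1 0)) k
  -- entrywise derivative of G(s)
  have hGent : ∀ (i j : Fin 2),
      HasDerivAt (fun s : ℝ =>
        ((mat2 (a0 + s • d0) (a1 + s • d1))ᵀ * mat2 (a0 + s • d0) (a1 + s • d1)) i j)
        (G' i j) 0 := by
    intro i j
    have h := HasDerivAt.fun_sum (u := Finset.univ)
      (fun (k : Fin 3) _ => (hAent k i).fun_mul (hAent k j))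
    have hval : ∑ k : Fin 3, (Dm k i * mat2 a0 a1 k j + mat2 a0 a1 k i * Dm k j) = G' i j := by
      simp [hG', Matrix.mul_apply, Matrix.transpose_apply, Finset.sum_add_distrib, hA]
    simp only [Matrix.mul_apply, Matrix.transpose_apply]
    have h0A : ∀ (k : Fin 3) (i : Fin 2), mat2 (a0 + (0:ℝ) • d0) (a1 + (0:ℝ) • d1) k i = mat2 a0 a1 k i := by
      intro k i; norm_num
    simp only [h0A] at h
    rw [← hval]
    exact h
  -- entrywise derivative of G(s)⁻¹
  have hG00 : (fun s : ℝ =>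
      (mat2 (a0 + s • d0) (a1 + s • d1))ᵀ * mat2 (a0 + s • d0) (a1 + s • d1)) 0 = G0 := by
    simp [hG0, hA]
  have hGinv : ∀ (i j : Fin 2), HasDerivAt (fun s : ℝ =>
      ((mat2 (a0 + s • d0) (a1 + s • d1))ᵀ * mat2 (a0 + s • d0) (a1 + s • d1))⁻¹ i j)
      ((-(G0⁻¹ * G' * G0⁻¹)) i j) 0 := by
    have := inv2_hasDerivAt
      (fun s : ℝ => (mat2 (a0 + s • d0) (a1 + s • d1))ᵀ * mat2 (a0 + s • d0) (a1 + s • d1))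
      G' 0 hGent (by simp only [zero_smul, add_zero]; exact hdet0)
    simp only [zero_smul, add_zero] at this; exact this
  -- assemble the product rule
  have h1 : HasDerivAt (fun s : ℝ => Bᵀ *ᵥ unitv (crossProduct (a0 + s • d0) (a1 + s • d1)))
      (Bᵀ *ᵥ dn) 0 := by
    have := hasDerivAt_mulVec (fun _ : ℝ => Bᵀ) 0
      (fun s : ℝ => unitv (crossProduct (a0 + s • d0) (a1 + s • d1))) dn 0
      (fun i j => hasDerivAt_const 0 _) hn
    simpa using this
  have h2 : HasDerivAt (fun s : ℝ =>
      ((mat2 (a0 + s • d0) (a1 + s • d1))ᵀ * mat2 (a0 + s • d0) (a1 + s • d1))⁻¹ *ᵥ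
        (Bᵀ *ᵥ unitv (crossProduct (a0 + s • d0) (a1 + s • d1))))
      ((-(G0⁻¹ * G' * G0⁻¹)) *ᵥ (Bᵀ *ᵥ n0) + G0⁻¹ *ᵥ (Bᵀ *ᵥ dn)) 0 := by
    have := hasDerivAt_mulVec
      (fun s : ℝ => ((mat2 (a0 + s • d0) (a1 + s • d1))ᵀ * mat2 (a0 + s • d0) (a1 + s • d1))⁻¹)
      (-(G0⁻¹ * G' * G0⁻¹))
      (fun s : ℝ => Bᵀ *ᵥ unitv (crossProduct (a0 + s • d0) (a1 + s • d1)))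
      (Bᵀ *ᵥ dn) 0 hGinv h1
    simpa [hG00, hn0] using this
  have h3 : HasDerivAt (fun s : ℝ =>
      mat2 (a0 + s • d0) (a1 + s • d1) *ᵥ
        (((mat2 (a0 + s • d0) (a1 + s • d1))ᵀ * mat2 (a0 + s • d0) (a1 + s • d1))⁻¹ *ᵥ
          (Bᵀ *ᵥ unitv (crossProduct (a0 + s • d0) (a1 + s • d1)))))
      (Dm *ᵥ (G0⁻¹ *ᵥ (Bᵀ *ᵥ n0)) +
        A *ᵥ ((-(G0⁻¹ * G' * G0⁻¹)) *ᵥ (Bᵀ *ᵥ n0) + G0⁻¹ *ᵥ (Bᵀ *ᵥ dn))) 0 := by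
    have := hasDerivAt_mulVec
      (fun s : ℝ => mat2 (a0 + s • d0) (a1 + s • d1)) Dm
      (fun s : ℝ =>
        ((mat2 (a0 + s • d0) (a1 + s • d1))ᵀ * mat2 (a0 + s • d0) (a1 + s • d1))⁻¹ *ᵥ
          (Bᵀ *ᵥ unitv (crossProduct (a0 + s • d0) (a1 + s • d1)))) _ 0 hAent h2
    have h0A : mat2 (a0 + (0:ℝ) • d0) (a1 + (0:ℝ) • d1) = A := by
      rw [hA]; norm_num
    simpa [h0A, hG00, hn0] using this
  have hFd : HasDerivAt F
      (-(Dm *ᵥ (G0⁻¹ *ᵥ (Bᵀ *ᵥ n0)) +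
        A *ᵥ ((-(G0⁻¹ * G' * G0⁻¹)) *ᵥ (Bᵀ *ᵥ n0) + G0⁻¹ *ᵥ (Bᵀ *ᵥ dn)))) 0 := by
    have heq : F = fun s : ℝ =>
        -(mat2 (a0 + s • d0) (a1 + s • d1) *ᵥ
          (((mat2 (a0 + s • d0) (a1 + s • d1))ᵀ * mat2 (a0 + s • d0) (a1 + s • d1))⁻¹ *ᵥ
            (Bᵀ *ᵥ unitv (crossProduct (a0 + s • d0) (a1 + s • d1))))) := by
      funext s
      rw [hF]
      simp only [Matrix.mulVec_mulVec, Matrix.mul_assoc]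
    rw [heq]
    exact h3.neg
  -- identify the stated derivative with ours
  have hjv : jac v x = B := by rw [hB, jac_eq, hb0, hb1]
  have hjw : jac w x = Dm := by rw [hDm, jac_eq, hd0, hd1]
  have hjp : jac ψ x = A := by rw [hA, jac_eq, ha0, ha1]
  have hmet : met ψ x = G0 := by rw [met, hjp, hG0]
  have hnrm : nrm ψ x = n0 := by rw [hn0, nrm, crossPsi, unitv, ha0, ha1]
  have hvaleq :
      (-((jac w x * (met ψ x)⁻¹ * (jac v x)ᵀ) *ᵥ nrm ψ x)
        - ((jac ψ x *
            (-((met ψ x)⁻¹ * ((jac w x)ᵀ * jac ψ x + (jac ψ x)ᵀ * jac w x)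
              * (met ψ x)⁻¹)) * (jac v x)ᵀ) *ᵥ nrm ψ x)
        - ((jac ψ x * (met ψ x)⁻¹ * (jac v x)ᵀ) *ᵥ
            (-((jac ψ x * (met ψ x)⁻¹ * (jac w x)ᵀ) *ᵥ nrm ψ x))))
      = -(Dm *ᵥ (G0⁻¹ *ᵥ (Bᵀ *ᵥ n0)) +
          A *ᵥ ((-(G0⁻¹ * G' * G0⁻¹)) *ᵥ (Bᵀ *ᵥ n0) + G0⁻¹ *ᵥ (Bᵀ *ᵥ dn))) := by
    rw [hjv, hjw, hjp, hmet, hnrm, hdn, hG']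
    simp only [← Matrix.mulVec_mulVec, Matrix.mulVec_add, Matrix.mulVec_neg, Matrix.neg_mulVec]
    abel
  rw [hvaleq]
  exact hFd.congr_of_eventuallyEq hFeq


end
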